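/- arXiv:2201.12167 — 6 statements merged into one kernel-verified Lean document; each statement's English description precedes it below -/
import Mathlib

section
/- Let g be a Lie algebra with a complex structure J (J² = -id) satisfying the integrability condition [JX,JY] = [X,Y] + J[JX,Y] + J[X,JY] for all X,Y. Fix e₁ in g with Je₁ = e₂, and suppose n is a J-invariant ideal with g = span{e₁,e₂} ⊕ n. Let A and B denote the projections onto n of ad(e₁)|_n and ad(e₂)|_n respectively, and let J_n be the restriction of J to n. Then J_n A - A J_n = J_n (B J_n - J_n B), i.e. [J_n, A] = J_n [B, J_n] as endomorphisms of n. -/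
/-- Let `g` be a Lie algebra with an integrable complex structure `J`, `n` a
`J`-invariant ideal, and `e₁, e₂ = J e₁` spanning a complement of `n`. If `p` is the projection
of `g` onto `n` along `span{e₁,e₂}`, and `A = p ∘ ad(e₁)`, `B = p ∘ ad(e₂)` on `n`, then
`[J_n, A] = J_n [B, J_n]` on `n`, i.e. `J(AY) - A(JY) = J(B(JY)) - J(J(BY))` for all `Y ∈ n`. -/
theorem stmt3
    (g : Type*) [LieRing g] [LieAlgebra ℝ g]
    (J : g →ₗ[ℝ] g)
    (hJ2 : ∀ x, J (J x) = -x)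
    (hint : ∀ x y : g, ⁅J x, J y⁆ = ⁅x, y⁆ + J ⁅J x, y⁆ + J ⁅x, J y⁆)
    (n : LieIdeal ℝ g)
    (hJn : ∀ x ∈ n, J x ∈ n)
    (e₁ e₂ : g)
    (he₂ : J e₁ = e₂)
    (p : g →ₗ[ℝ] g)
    (hpn : ∀ x : g, p x ∈ n)
    (hpid : ∀ x ∈ n, p x = x)
    (hpe₁ : p e₁ = 0)
    (hpe₂ : p e₂ = 0)
    (hspan : ∀ x : g, x - p x ∈ Submodule.span ℝ ({e₁, e₂} : Set g))
    (A B : g →ₗ[ℝ] g)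
    (hA : ∀ x, A x = p ⁅e₁, x⁆)
    (hB : ∀ x, B x = p ⁅e₂, x⁆) :
    ∀ Y ∈ n, J (A Y) - A (J Y) = J (B (J Y)) - J (J (B Y)) := by
  intro Y hY
  have hJe₂ : J e₂ = -e₁ := by rw [← he₂, hJ2]
  have hkey : ∀ z : g, p (J z) = J (p z) := by
    intro z
    obtain ⟨a, b, hab⟩ := Submodule.mem_span_pair.mp (hspan z)
    have hz : z = a • e₁ + b • e₂ + p z := by rw [hab]; abel
    have h1 : J (p z) ∈ n := hJn _ (hpn z)
    calc p (J z) = p (J (a • e₁ + b • e₂ + p z)) := by rw [← hz]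
    _ = a • p (J e₁) + b • p (J e₂) + p (J (p z)) := by
        simp [map_add, map_smul]
    _ = J (p z) := by
        rw [he₂, hJe₂, hpe₂, hpid _ h1]
        simp [hpe₁]
  have hstar : B (J Y) = A Y + J (B Y) + J (A (J Y)) := by
    have h := hint e₁ Y
    rw [he₂] at h
    have h2 := congrArg p h
    rw [map_add, map_add, hkey, hkey] at h2
    rw [hB, hA, hB, hA]
    exact h2
  have h3 := congrArg J hstar
  rw [map_add, map_add, hJ2 (A (J Y))] at h3
  rw [h3]
  abel
end

section
/- Let (n, J, ⟨·,·⟩) be a 2-step nilpotent Lie algebra with Hermitian structure whose center z is J-invariant, and define the Bismut torsion c(U,Y,Z) = -⟨[JU,JY],Z⟩ - ⟨[JY,JZ],U⟩ - ⟨[JZ,JU],Y⟩. If dc = 0 (the Chevalley–Eilenberg differential of c vanishes), then for all W, Y in n: 2⟨[Y,JY],[W,JW]⟩ = ‖[W,Y]‖² + ‖[W,JY]‖² + ‖[JW,Y]‖² + ‖[JW,JY]‖². -/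
/-- For a 2-step nilpotent Hermitian Lie algebra with `J`-invariant center and
vanishing Chevalley–Eilenberg differential of the Bismut torsion 3-form `c`, one has
`2⟨[Y,JY],[W,JW]⟩ = ‖[W,Y]‖² + ‖[W,JY]‖² + ‖[JW,Y]‖² + ‖[JW,JY]‖²` for all `W, Y`. -/
theorem stmt6
    (n : Type*) [LieRing n] [LieAlgebra ℝ n] [Module.Finite ℝ n]
    (ip : n →ₗ[ℝ] n →ₗ[ℝ] ℝ)
    (hsymm : ∀ x y, ip x y = ip y x)
    (hpos : ∀ x : n, x ≠ 0 → 0 < ip x x)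
    (J : n →ₗ[ℝ] n)
    (hJ2 : ∀ x, J (J x) = -x)
    (hint : ∀ x y : n, ⁅J x, J y⁆ = ⁅x, y⁆ + J ⁅J x, y⁆ + J ⁅x, J y⁆)
    (hJorth : ∀ x y, ip (J x) (J y) = ip x y)
    (h2step : ∀ x y w : n, ⁅⁅x, y⁆, w⁆ = 0)
    (hJcenter : ∀ x ∈ LieAlgebra.center ℝ n, J x ∈ LieAlgebra.center ℝ n)
    -- `dc = 0`, where `dc` is the Chevalley–Eilenberg differential of the Bismut torsion
    -- `c(U,Y,Z) = -⟨[JU,JY],Z⟩ - ⟨[JY,JZ],U⟩ - ⟨[JZ,JU],Y⟩`: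
    (hSKT : ∀ W U Y Z : n,
        ip ⁅J ⁅W, U⁆, J Y⁆ Z + ip ⁅J Y, J Z⁆ ⁅W, U⁆ + ip ⁅J Z, J ⁅W, U⁆⁆ Y
      - ip ⁅J ⁅W, Y⁆, J U⁆ Z - ip ⁅J U, J Z⁆ ⁅W, Y⁆ - ip ⁅J Z, J ⁅W, Y⁆⁆ U
      + ip ⁅J ⁅W, Z⁆, J U⁆ Y + ip ⁅J U, J Y⁆ ⁅W, Z⁆ + ip ⁅J Y, J ⁅W, Z⁆⁆ U
      + ip ⁅J ⁅U, Y⁆, J W⁆ Z + ip ⁅J W, J Z⁆ ⁅U, Y⁆ + ip ⁅J Z, J ⁅U, Y⁆⁆ W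
      - ip ⁅J ⁅U, Z⁆, J W⁆ Y - ip ⁅J W, J Y⁆ ⁅U, Z⁆ - ip ⁅J Y, J ⁅U, Z⁆⁆ W
      + ip ⁅J ⁅Y, Z⁆, J W⁆ U + ip ⁅J W, J U⁆ ⁅Y, Z⁆ + ip ⁅J U, J ⁅Y, Z⁆⁆ W = 0) :
    ∀ W Y : n,
      2 * ip ⁅Y, J Y⁆ ⁅W, J W⁆ =
        ip ⁅W, Y⁆ ⁅W, Y⁆ + ip ⁅W, J Y⁆ ⁅W, J Y⁆
          + ip ⁅J W, Y⁆ ⁅J W, Y⁆ + ip ⁅J W, J Y⁆ ⁅J W, J Y⁆ := by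
  intro W Y
  -- Brackets are central, hence (J of brackets) are central, hence bracket with them is 0.
  have hcen : ∀ x y : n, ⁅x, y⁆ ∈ LieAlgebra.center ℝ n := by
    intro x y
    rw [LieModule.mem_maxTrivSubmodule]
    intro m
    rw [← lie_skew, h2step, neg_zero]
  have hz : ∀ x y z : n, ⁅J ⁅x, y⁆, z⁆ = (0 : n) := by
    intro x y z
    rw [← neg_neg ⁅J ⁅x, y⁆, z⁆, lie_skew z (J ⁅x, y⁆)]
    have := hJcenter _ (hcen x y)
    rw [LieModule.mem_maxTrivSubmodule] at this
    rw [this z, neg_zero]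
  have hz' : ∀ x y z : n, ⁅z, J ⁅x, y⁆⁆ = (0 : n) := by
    intro x y z
    have := hJcenter _ (hcen x y)
    rw [LieModule.mem_maxTrivSubmodule] at this
    exact this z
  have h := hSKT W (J W) Y (J Y)
  simp only [hz, hz', hJ2, map_zero, LinearMap.zero_apply, lie_neg, neg_lie, neg_neg,
    map_neg, LinearMap.neg_apply] at h
  have e1 : ⁅J Y, Y⁆ = -⁅Y, J Y⁆ := by rw [← lie_skew]
  have e2 : ⁅J W, W⁆ = -⁅W, J W⁆ := by rw [← lie_skew]
  rw [e1, e2] at h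
  simp only [map_neg, LinearMap.neg_apply] at h
  have hs := hsymm ⁅W, J W⁆ ⁅Y, J Y⁆
  linarith
end

section
/- Let (n, J, ⟨·,·⟩) be a 2-step nilpotent Hermitian Lie algebra with J-invariant center and closed Bismut torsion 3-form (SKT). Then an element Y of n lies in the center of n if and only if [Y, JY] = 0. -/
/-- For a 2-step nilpotent Hermitian Lie algebra (SKT: with `J`-invariant center
and closed Bismut torsion 3-form), an element `Y` lies in the center iff `[Y, JY] = 0`. -/
theorem stmt7
    (n : Type*) [LieRing n] [LieAlgebra ℝ n] [Module.Finite ℝ n]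
    (ip : n →ₗ[ℝ] n →ₗ[ℝ] ℝ)
    (hsymm : ∀ x y, ip x y = ip y x)
    (hpos : ∀ x : n, x ≠ 0 → 0 < ip x x)
    (J : n →ₗ[ℝ] n)
    (hJ2 : ∀ x, J (J x) = -x)
    (hint : ∀ x y : n, ⁅J x, J y⁆ = ⁅x, y⁆ + J ⁅J x, y⁆ + J ⁅x, J y⁆)
    (hJorth : ∀ x y, ip (J x) (J y) = ip x y)
    (h2step : ∀ x y w : n, ⁅⁅x, y⁆, w⁆ = 0)
    (hJcenter : ∀ x ∈ LieAlgebra.center ℝ n, J x ∈ LieAlgebra.center ℝ n)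
    -- `dc = 0`, where `dc` is the Chevalley–Eilenberg differential of the Bismut torsion
    -- `c(U,Y,Z) = -⟨[JU,JY],Z⟩ - ⟨[JY,JZ],U⟩ - ⟨[JZ,JU],Y⟩`:
    (hSKT : ∀ W U Y Z : n,
        ip ⁅J ⁅W, U⁆, J Y⁆ Z + ip ⁅J Y, J Z⁆ ⁅W, U⁆ + ip ⁅J Z, J ⁅W, U⁆⁆ Y
      - ip ⁅J ⁅W, Y⁆, J U⁆ Z - ip ⁅J U, J Z⁆ ⁅W, Y⁆ - ip ⁅J Z, J ⁅W, Y⁆⁆ U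
      + ip ⁅J ⁅W, Z⁆, J U⁆ Y + ip ⁅J U, J Y⁆ ⁅W, Z⁆ + ip ⁅J Y, J ⁅W, Z⁆⁆ U
      + ip ⁅J ⁅U, Y⁆, J W⁆ Z + ip ⁅J W, J Z⁆ ⁅U, Y⁆ + ip ⁅J Z, J ⁅U, Y⁆⁆ W
      - ip ⁅J ⁅U, Z⁆, J W⁆ Y - ip ⁅J W, J Y⁆ ⁅U, Z⁆ - ip ⁅J Y, J ⁅U, Z⁆⁆ W
      + ip ⁅J ⁅Y, Z⁆, J W⁆ U + ip ⁅J W, J U⁆ ⁅Y, Z⁆ + ip ⁅J U, J ⁅Y, Z⁆⁆ W = 0) :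
    ∀ Y : n, Y ∈ LieAlgebra.center ℝ n ↔ ⁅Y, J Y⁆ = 0 := by
  have hmem : ∀ x : n, x ∈ LieAlgebra.center ℝ n ↔ ∀ m : n, ⁅m, x⁆ = 0 := fun x =>
    LieModule.mem_maxTrivSubmodule ℝ n n x
  -- every bracket is central, and so is its J-image
  have hcent : ∀ a b : n, J ⁅a, b⁆ ∈ LieAlgebra.center ℝ n := by
    intro a b
    apply hJcenter
    rw [hmem]
    intro m
    rw [← lie_skew, h2step, neg_zero]
  have hcent1 : ∀ a b c : n, ⁅J ⁅a, b⁆, c⁆ = 0 := by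
    intro a b c
    have := (hmem _).mp (hcent a b) c
    rw [← lie_skew, this, neg_zero]
  have hcent2 : ∀ a b c : n, ⁅c, J ⁅a, b⁆⁆ = 0 := fun a b c => (hmem _).mp (hcent a b) c
  have hnn : ∀ x : n, 0 ≤ ip x x := by
    intro x
    by_cases hx : x = 0
    · simp [hx]
    · exact (hpos x hx).le
  have hzero : ∀ x : n, ip x x = 0 → x = 0 := by
    intro x hx
    by_contra h
    exact absurd hx (ne_of_gt (hpos x h))
  intro Y
  constructor
  · intro hY
    exact (hmem Y).mp hY (J Y) |>.symm ▸ (by rw [← lie_skew, (hmem Y).mp hY (J Y), neg_zero])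
  · intro hY
    have hY' : ⁅J Y, Y⁆ = 0 := by rw [← lie_skew, hY, neg_zero]
    rw [hmem]
    intro Z
    suffices h : ⁅Y, Z⁆ = 0 by rw [← lie_skew, h, neg_zero]
    have key : ip ⁅Y, J Z⁆ ⁅Y, J Z⁆ + ip ⁅Y, Z⁆ ⁅Y, Z⁆
        + ip ⁅J Y, J Z⁆ ⁅J Y, J Z⁆ + ip ⁅J Y, Z⁆ ⁅J Y, Z⁆ = 0 := by
      have h := hSKT Y (J Y) (J Z) Z
      simp only [hcent1, hcent2, hJ2, lie_neg, neg_lie, neg_neg, map_neg, map_zero, zero_lie, lie_zero,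
        LinearMap.neg_apply, LinearMap.zero_apply, hY, hY'] at h
      linarith
    apply hzero
    have h1 := hnn ⁅Y, J Z⁆
    have h2 := hnn ⁅Y, Z⁆
    have h3 := hnn ⁅J Y, J Z⁆
    have h4 := hnn ⁅J Y, Z⁆
    linarith
end

section
/- In the construction g = n₁ ⊕ n₂ ⊕ span{Z, W} with [Z,W] = X + Y where X ∈ z(n₁), Y ∈ z(n₂) are nonzero, the complex structure J defined by J|_{n₁} = J₁, J|_{n₂} = J₂, JZ = W, JW = -Z is integrable on g (satisfies the Nijenhuis condition) provided J₁ and J₂ are integrable on n₁ and n₂ respectively and J_i preserves the center of n_i. -/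
/-- In the construction `g = n₁ ⊕ n₂ ⊕ span{Z,W}` with `[Z,W] = X + Y`
(`0 ≠ X ∈ z(n₁)`, `0 ≠ Y ∈ z(n₂)`), the blockwise complex structure `J` with `J|_{nᵢ} = Jᵢ`,
`JZ = W`, `JW = -Z` is integrable on `g`, provided `J₁, J₂` are integrable complex structures
preserving the respective centers. Here `g` is modeled as `n₁ × n₂ × ℝ × ℝ`. -/
theorem stmt9
    (n₁ n₂ : Type*) [LieRing n₁] [LieAlgebra ℝ n₁] [LieRing n₂] [LieAlgebra ℝ n₂]
    (h2step₁ : ∀ x y w : n₁, ⁅⁅x, y⁆, w⁆ = 0)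
    (h2step₂ : ∀ x y w : n₂, ⁅⁅x, y⁆, w⁆ = 0)
    (J₁ : n₁ →ₗ[ℝ] n₁) (J₂ : n₂ →ₗ[ℝ] n₂)
    (hJ₁2 : ∀ x, J₁ (J₁ x) = -x) (hJ₂2 : ∀ x, J₂ (J₂ x) = -x)
    (hint₁ : ∀ x y : n₁, ⁅J₁ x, J₁ y⁆ = ⁅x, y⁆ + J₁ ⁅J₁ x, y⁆ + J₁ ⁅x, J₁ y⁆)
    (hint₂ : ∀ x y : n₂, ⁅J₂ x, J₂ y⁆ = ⁅x, y⁆ + J₂ ⁅J₂ x, y⁆ + J₂ ⁅x, J₂ y⁆)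
    (hJc₁ : ∀ x ∈ LieAlgebra.center ℝ n₁, J₁ x ∈ LieAlgebra.center ℝ n₁)
    (hJc₂ : ∀ x ∈ LieAlgebra.center ℝ n₂, J₂ x ∈ LieAlgebra.center ℝ n₂)
    (X : n₁) (hX : X ∈ LieAlgebra.center ℝ n₁) (hX0 : X ≠ 0)
    (Y : n₂) (hY : Y ∈ LieAlgebra.center ℝ n₂) (hY0 : Y ≠ 0)
    (br : (n₁ × n₂ × ℝ × ℝ) → (n₁ × n₂ × ℝ × ℝ) → (n₁ × n₂ × ℝ × ℝ))
    (hbr : ∀ u v : n₁ × n₂ × ℝ × ℝ,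
      br u v = (⁅u.1, v.1⁆ + (u.2.2.1 * v.2.2.2 - u.2.2.2 * v.2.2.1) • X,
                ⁅u.2.1, v.2.1⁆ + (u.2.2.1 * v.2.2.2 - u.2.2.2 * v.2.2.1) • Y, 0, 0))
    (J : (n₁ × n₂ × ℝ × ℝ) → (n₁ × n₂ × ℝ × ℝ))
    (hJ : ∀ u : n₁ × n₂ × ℝ × ℝ, J u = (J₁ u.1, J₂ u.2.1, -u.2.2.2, u.2.2.1)) :
    ∀ u v : n₁ × n₂ × ℝ × ℝ,
      br (J u) (J v) = br u v + J (br (J u) v) + J (br u (J v)) := by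
  intro u v
  simp only [hbr, hJ, Prod.fst_add, Prod.snd_add, Prod.mk_add_mk, Prod.mk.injEq]
  refine ⟨?_, ?_, by ring, by ring⟩
  · rw [hint₁]
    simp only [map_add, map_smul]
    module
  · rw [hint₂]
    simp only [map_add, map_smul]
    module
end

section
/- Let n be the 6-dimensional real Lie algebra with orthonormal basis f₁,...,f₆ and structure equations given by df⁵ = -f¹² + f¹⁴ - f²³ - f³⁴ (all other df^i = 0), and J the complex structure Jf₁ = f₂, Jf₃ = f₄, Jf₅ = f₆. Then J is an abelian complex structure, and the Bismut torsion 3-form c = -f¹²⁵ + f¹⁴⁵ - f²³⁵ - f³⁴⁵ is closed, so (n,J,⟨·,·⟩) is SKT. -/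
/-- The 6-dimensional nilpotent Lie bracket with `[f₁,f₂] = f₅`, `[f₁,f₄] = -f₅`,
`[f₂,f₃] = f₅`, `[f₃,f₄] = f₅` (0-indexed on `Fin 6`), i.e. `df⁵ = -f¹²+f¹⁴-f²³-f³⁴`. -/
def br6 (x y : Fin 6 → ℝ) : Fin 6 → ℝ :=
  fun i => if i = 4 then
    (x 0 * y 1 - x 1 * y 0) - (x 0 * y 3 - x 3 * y 0)
      + (x 1 * y 2 - x 2 * y 1) + (x 2 * y 3 - x 3 * y 2)
  else 0

/-- The complex structure `Jf₁ = f₂`, `Jf₃ = f₄`, `Jf₅ = f₆`. -/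
def J6 (x : Fin 6 → ℝ) : Fin 6 → ℝ := ![-x 1, x 0, -x 3, x 2, -x 5, x 4]

/-- The standard inner product on `ℝ⁶` (the basis `f₁,…,f₆` is orthonormal). -/
def ip6 (x y : Fin 6 → ℝ) : ℝ := ∑ i, x i * y i

/-- The Bismut torsion 3-form. -/
def c6 (U Y Z : Fin 6 → ℝ) : ℝ :=
  -ip6 (br6 (J6 U) (J6 Y)) Z - ip6 (br6 (J6 Y) (J6 Z)) U - ip6 (br6 (J6 Z) (J6 U)) Y

/-- The Chevalley–Eilenberg differential of `c6`. -/
def dc6 (W U Y Z : Fin 6 → ℝ) : ℝ :=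
    ip6 (br6 (J6 (br6 W U)) (J6 Y)) Z + ip6 (br6 (J6 Y) (J6 Z)) (br6 W U)
      + ip6 (br6 (J6 Z) (J6 (br6 W U))) Y
  - ip6 (br6 (J6 (br6 W Y)) (J6 U)) Z - ip6 (br6 (J6 U) (J6 Z)) (br6 W Y)
      - ip6 (br6 (J6 Z) (J6 (br6 W Y))) U
  + ip6 (br6 (J6 (br6 W Z)) (J6 U)) Y + ip6 (br6 (J6 U) (J6 Y)) (br6 W Z)
      + ip6 (br6 (J6 Y) (J6 (br6 W Z))) U
  + ip6 (br6 (J6 (br6 U Y)) (J6 W)) Z + ip6 (br6 (J6 W) (J6 Z)) (br6 U Y)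
      + ip6 (br6 (J6 Z) (J6 (br6 U Y))) W
  - ip6 (br6 (J6 (br6 U Z)) (J6 W)) Y - ip6 (br6 (J6 W) (J6 Y)) (br6 U Z)
      - ip6 (br6 (J6 Y) (J6 (br6 U Z))) W
  + ip6 (br6 (J6 (br6 Y Z)) (J6 W)) U + ip6 (br6 (J6 W) (J6 U)) (br6 Y Z)
      + ip6 (br6 (J6 U) (J6 (br6 Y Z))) W

/-- The 3-form `f^i ∧ f^j ∧ f^k`. -/
def w6 (i j k : Fin 6) (U Y Z : Fin 6 → ℝ) : ℝ :=
  Matrix.det !![U i, U j, U k; Y i, Y j, Y k; Z i, Z j, Z k]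


section helpers
variable {α : Type*} (a b c d e f : α)
@[simp] lemma vec6_0 : ![a,b,c,d,e,f] 0 = a := rfl
@[simp] lemma vec6_1 : ![a,b,c,d,e,f] 1 = b := rfl
@[simp] lemma vec6_2 : ![a,b,c,d,e,f] 2 = c := rfl
@[simp] lemma vec6_3 : ![a,b,c,d,e,f] 3 = d := rfl
@[simp] lemma vec6_4 : ![a,b,c,d,e,f] 4 = e := rfl
@[simp] lemma vec6_5 : ![a,b,c,d,e,f] 5 = f := rfl
end helpers

section helpers2
variable {α : Type*} (a b c d e f g h i : α)
@[simp] lemma m3_00 : !![a,b,c;d,e,f;g,h,i] 0 0 = a := rfl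
@[simp] lemma m3_01 : !![a,b,c;d,e,f;g,h,i] 0 1 = b := rfl
@[simp] lemma m3_02 : !![a,b,c;d,e,f;g,h,i] 0 2 = c := rfl
@[simp] lemma m3_10 : !![a,b,c;d,e,f;g,h,i] 1 0 = d := rfl
@[simp] lemma m3_11 : !![a,b,c;d,e,f;g,h,i] 1 1 = e := rfl
@[simp] lemma m3_12 : !![a,b,c;d,e,f;g,h,i] 1 2 = f := rfl
@[simp] lemma m3_20 : !![a,b,c;d,e,f;g,h,i] 2 0 = g := rfl
@[simp] lemma m3_21 : !![a,b,c;d,e,f;g,h,i] 2 1 = h := rfl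
@[simp] lemma m3_22 : !![a,b,c;d,e,f;g,h,i] 2 2 = i := rfl
end helpers2

/-- `br6` makes `ℝ⁶` a (2-step nilpotent) Lie algebra, `J6` is an abelian (hence
integrable) complex structure, the Bismut torsion equals `-f¹²⁵+f¹⁴⁵-f²³⁵-f³⁴⁵`, and it is
closed, so `(ℝ⁶, J6, ip6)` is SKT. -/


theorem stmt12 :
    (∀ x y : Fin 6 → ℝ, br6 x y = - br6 y x) ∧
    (∀ x y z : Fin 6 → ℝ, br6 x (br6 y z) + br6 y (br6 z x) + br6 z (br6 x y) = 0) ∧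
    (∀ x : Fin 6 → ℝ, J6 (J6 x) = -x) ∧
    (∀ x y : Fin 6 → ℝ, br6 (J6 x) (J6 y) = br6 x y) ∧
    (∀ U Y Z : Fin 6 → ℝ,
      c6 U Y Z = -w6 0 1 4 U Y Z + w6 0 3 4 U Y Z - w6 1 2 4 U Y Z - w6 2 3 4 U Y Z) ∧
    (∀ W U Y Z : Fin 6 → ℝ, dc6 W U Y Z = 0) := by
  refine ⟨?_, ?_, ?_, ?_, ?_, ?_⟩
  · intro x y; funext i
    simp only [br6, Pi.neg_apply]; split <;> ring
  · intro x y z; funext i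
    simp only [br6, Pi.add_apply, Pi.zero_apply]
    split <;> simp_all
  · intro x; funext i
    fin_cases i <;> simp [J6]
  · intro x y; funext i
    simp only [br6, J6]
    split <;> simp <;> ring_nf
  · intro U Y Z
    simp only [c6, ip6, br6, J6, w6, Fin.sum_univ_six, Matrix.det_fin_three,
      vec6_0, vec6_1, vec6_2, vec6_3, vec6_4, vec6_5,
      Matrix.cons_val', Matrix.cons_val_zero, Matrix.cons_val_one, Matrix.head_cons,
      Matrix.empty_val', Matrix.cons_val_fin_one, Matrix.head_fin_const,
      m3_00, m3_01, m3_02, m3_10, m3_11, m3_12, m3_20, m3_21, m3_22,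
      Fin.reduceEq, reduceIte, Fin.isValue]
    ring
  · intro W U Y Z
    simp only [dc6, ip6, br6, J6, Fin.sum_univ_six,
      vec6_0, vec6_1, vec6_2, vec6_3, vec6_4, vec6_5,
      Fin.reduceEq, reduceIte, Fin.isValue]
    ring
end

section
/- Let g be a 2-step nilpotent Lie algebra constructed as g = n₁ ⊕ n₂ ⊕ span{Z,W} with [Z,W] = X + Y, X ∈ z(n₁) ∩ [n₁,n₁]^⊥ nonzero, Y ∈ z(n₂) ∩ [n₂,n₂]^⊥ nonzero, where for each i, dim z(n_i) > dim [n_i,n_i]. Then dim z(g) > dim [g,g]. -/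
/-- Product submodule is linearly equivalent to the product of the submodules. -/
def submodProdEquiv {R M N : Type*} [CommRing R] [AddCommGroup M] [AddCommGroup N]
    [Module R M] [Module R N] (p : Submodule R M) (q : Submodule R N) :
    (p.prod q) ≃ₗ[R] p × q where
  toFun x := (⟨x.1.1, x.2.1⟩, ⟨x.1.2, x.2.2⟩)
  invFun y := ⟨(y.1.1, y.2.1), ⟨y.1.2, y.2.2⟩⟩
  left_inv _ := rfl
  right_inv _ := rfl
  map_add' _ _ := rfl
  map_smul' _ _ := rfl

lemma finrank_submod_prod {M N : Type*} [AddCommGroup M] [AddCommGroup N]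
    [Module ℝ M] [Module ℝ N] [Module.Finite ℝ M] [Module.Finite ℝ N]
    (p : Submodule ℝ M) (q : Submodule ℝ N) :
    Module.finrank ℝ (p.prod q) = Module.finrank ℝ p + Module.finrank ℝ q := by
  rw [(submodProdEquiv p q).finrank_eq, Module.finrank_prod]


lemma mem_center_iff' {n : Type*} [LieRing n] [LieAlgebra ℝ n] (x : n) :
    x ∈ (LieAlgebra.center ℝ n : Submodule ℝ n) ↔ ∀ y : n, ⁅x, y⁆ = 0 := by
  rw [LieIdeal.toLieSubalgebra_toSubmodule, LieSubmodule.mem_toSubmodule]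
  constructor
  · intro h y
    have := LieModule.mem_maxTrivSubmodule ℝ n n x |>.mp h y
    rw [← lie_skew, this, neg_zero]
  · intro h
    exact (LieModule.mem_maxTrivSubmodule ℝ n n x).mpr fun z => by
      rw [← lie_skew, h z, neg_zero]

/-- For the construction `g = n₁ ⊕ n₂ ⊕ span{Z,W}`, `[Z,W] = X + Y` with
`0 ≠ X ∈ z(n₁) ∩ [n₁,n₁]^⊥`, `0 ≠ Y ∈ z(n₂) ∩ [n₂,n₂]^⊥`, if `dim z(nᵢ) > dim [nᵢ,nᵢ]` for
`i = 1,2`, then the center of `g` is `z(n₁) ⊕ z(n₂)` and `dim z(g) > dim [g,g]`. -/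
theorem stmt16
    (n₁ n₂ : Type*) [LieRing n₁] [LieAlgebra ℝ n₁] [LieRing n₂] [LieAlgebra ℝ n₂]
    [Module.Finite ℝ n₁] [Module.Finite ℝ n₂]
    (h2step₁ : ∀ x y w : n₁, ⁅⁅x, y⁆, w⁆ = 0)
    (h2step₂ : ∀ x y w : n₂, ⁅⁅x, y⁆, w⁆ = 0)
    (ip₁ : n₁ →ₗ[ℝ] n₁ →ₗ[ℝ] ℝ) (ip₂ : n₂ →ₗ[ℝ] n₂ →ₗ[ℝ] ℝ)
    (hsymm₁ : ∀ x y, ip₁ x y = ip₁ y x) (hsymm₂ : ∀ x y, ip₂ x y = ip₂ y x)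
    (hpos₁ : ∀ x : n₁, x ≠ 0 → 0 < ip₁ x x) (hpos₂ : ∀ x : n₂, x ≠ 0 → 0 < ip₂ x x)
    (X : n₁) (hX : X ∈ LieAlgebra.center ℝ n₁) (hX0 : X ≠ 0)
    (hXperp : ∀ u v : n₁, ip₁ X ⁅u, v⁆ = 0)
    (Y : n₂) (hY : Y ∈ LieAlgebra.center ℝ n₂) (hY0 : Y ≠ 0)
    (hYperp : ∀ u v : n₂, ip₂ Y ⁅u, v⁆ = 0)
    -- `dim z(nᵢ) > dim [nᵢ,nᵢ]`:
    (hdim₁ : Module.finrank ℝ (Submodule.span ℝ {w : n₁ | ∃ u v : n₁, w = ⁅u, v⁆}) <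
      Module.finrank ℝ (LieAlgebra.center ℝ n₁ : Submodule ℝ n₁))
    (hdim₂ : Module.finrank ℝ (Submodule.span ℝ {w : n₂ | ∃ u v : n₂, w = ⁅u, v⁆}) <
      Module.finrank ℝ (LieAlgebra.center ℝ n₂ : Submodule ℝ n₂))
    (br : (n₁ × n₂ × ℝ × ℝ) → (n₁ × n₂ × ℝ × ℝ) → (n₁ × n₂ × ℝ × ℝ))
    (hbr : ∀ u v : n₁ × n₂ × ℝ × ℝ,
      br u v = (⁅u.1, v.1⁆ + (u.2.2.1 * v.2.2.2 - u.2.2.2 * v.2.2.1) • X,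
                ⁅u.2.1, v.2.1⁆ + (u.2.2.1 * v.2.2.2 - u.2.2.2 * v.2.2.1) • Y, 0, 0)) :
    (∀ x : n₁ × n₂ × ℝ × ℝ, (∀ y, br x y = 0) ↔
      x ∈ (LieAlgebra.center ℝ n₁ : Submodule ℝ n₁).prod
        (((LieAlgebra.center ℝ n₂ : Submodule ℝ n₂)).prod (⊥ : Submodule ℝ (ℝ × ℝ)))) ∧
    Module.finrank ℝ
        (Submodule.span ℝ {w : n₁ × n₂ × ℝ × ℝ | ∃ u v, w = br u v}) <
      Module.finrank ℝ
        ((LieAlgebra.center ℝ n₁ : Submodule ℝ n₁).prod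
          (((LieAlgebra.center ℝ n₂ : Submodule ℝ n₂)).prod (⊥ : Submodule ℝ (ℝ × ℝ)))) := by
  constructor
  · rintro ⟨x₁, x₂, a, b⟩
    rw [Submodule.mem_prod, Submodule.mem_prod, Submodule.mem_bot]
    constructor
    · intro h
      have ha : a = 0 := by
        have h1 := h (0, 0, 0, 1)
        rw [hbr] at h1
        simp only [Prod.ext_iff, Prod.fst_zero, Prod.snd_zero, lie_zero, zero_add, mul_one,
          mul_zero, sub_zero, smul_eq_zero] at h1
        exact h1.1.resolve_right hX0
      have hb : b = 0 := by
        have h1 := h (0, 0, 1, 0)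
        rw [hbr] at h1
        simp only [Prod.ext_iff, Prod.fst_zero, Prod.snd_zero, lie_zero, zero_add, mul_one,
          mul_zero, zero_sub, neg_smul, neg_eq_zero, smul_eq_zero] at h1
        exact h1.1.resolve_right hX0
      refine ⟨(mem_center_iff' x₁).mpr fun v => ?_, (mem_center_iff' x₂).mpr fun v => ?_, ?_⟩
      · have h1 := h (v, 0, 0, 0)
        rw [hbr] at h1
        simpa using congrArg Prod.fst h1
      · have h1 := h (0, v, 0, 0)
        rw [hbr] at h1
        simpa using congrArg (fun z : n₁ × n₂ × ℝ × ℝ => z.2.1) h1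
      · simp [ha, hb, Prod.ext_iff]
    · rintro ⟨hx₁, hx₂, hab⟩
      rw [Prod.ext_iff] at hab
      intro y
      rw [hbr]
      have c₁ := (mem_center_iff' x₁).mp hx₁ y.1
      have c₂ := (mem_center_iff' x₂).mp hx₂ y.2.1
      simp only [Prod.fst_zero, Prod.snd_zero] at hab
      simp [hab.1, hab.2, c₁, c₂, Prod.ext_iff]
  · have hRHS : Module.finrank ℝ
        ((LieAlgebra.center ℝ n₁ : Submodule ℝ n₁).prod
          (((LieAlgebra.center ℝ n₂ : Submodule ℝ n₂)).prod (⊥ : Submodule ℝ (ℝ × ℝ)))) =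
        Module.finrank ℝ (LieAlgebra.center ℝ n₁ : Submodule ℝ n₁) +
        Module.finrank ℝ (LieAlgebra.center ℝ n₂ : Submodule ℝ n₂) := by
      rw [finrank_submod_prod, finrank_submod_prod, finrank_bot, add_zero]
    set B₁ := Submodule.span ℝ {w : n₁ | ∃ u v : n₁, w = ⁅u, v⁆} with hB₁
    set B₂ := Submodule.span ℝ {w : n₂ | ∃ u v : n₂, w = ⁅u, v⁆} with hB₂
    set P := B₁.prod (B₂.prod (⊥ : Submodule ℝ (ℝ × ℝ))) with hP
    set L := Submodule.span ℝ {((X : n₁), (Y : n₂), (0 : ℝ), (0 : ℝ))} with hL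
    have hle : Submodule.span ℝ {w : n₁ × n₂ × ℝ × ℝ | ∃ u v, w = br u v} ≤ P ⊔ L := by
      rw [Submodule.span_le]
      rintro w ⟨u, v, rfl⟩
      rw [hbr]
      have key : (⁅u.1, v.1⁆ + (u.2.2.1 * v.2.2.2 - u.2.2.2 * v.2.2.1) • X,
          ⁅u.2.1, v.2.1⁆ + (u.2.2.1 * v.2.2.2 - u.2.2.2 * v.2.2.1) • Y, (0 : ℝ), (0 : ℝ)) =
          ((⁅u.1, v.1⁆, ⁅u.2.1, v.2.1⁆, (0 : ℝ), (0 : ℝ)) : n₁ × n₂ × ℝ × ℝ) +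
          (u.2.2.1 * v.2.2.2 - u.2.2.2 * v.2.2.1) • ((X : n₁), (Y : n₂), (0 : ℝ), (0 : ℝ)) := by
        simp [Prod.ext_iff]
      rw [SetLike.mem_coe, key]
      refine Submodule.add_mem _ (Submodule.mem_sup_left ?_) (Submodule.mem_sup_right
        (Submodule.smul_mem _ _ (Submodule.mem_span_singleton_self _)))
      exact Submodule.mem_prod.mpr ⟨Submodule.subset_span ⟨u.1, v.1, rfl⟩,
        Submodule.mem_prod.mpr ⟨Submodule.subset_span ⟨u.2.1, v.2.1, rfl⟩, by simp⟩⟩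
    have h1 : Module.finrank ℝ
        (Submodule.span ℝ {w : n₁ × n₂ × ℝ × ℝ | ∃ u v, w = br u v}) ≤
        Module.finrank ℝ (P ⊔ L : Submodule ℝ (n₁ × n₂ × ℝ × ℝ)) :=
      Submodule.finrank_mono hle
    have h2 := Submodule.finrank_sup_add_finrank_inf_eq P L
    have hPfr : Module.finrank ℝ P = Module.finrank ℝ B₁ + Module.finrank ℝ B₂ := by
      rw [hP, finrank_submod_prod, finrank_submod_prod, finrank_bot, add_zero]
    have hLfr : Module.finrank ℝ L = 1 := by
      rw [hL]
      exact finrank_span_singleton (by simp [Prod.ext_iff, hX0])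
    rw [hRHS]
    omega
end
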